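/- Let W = (V₁ × V₂)/span{(u₁,−u₂)} be the quotient vector space and let C ⊆ W be the image of C₁ × C₂ under the quotient map. Then C is a pointed convex cone: C ∩ (−C) = {0}. -/

import Mathlib

variable {V : Type*} [AddCommGroup V] [Module ℝ V]

/-- `P` is a pointed convex cone: closed under addition, nonnegative scalar
multiplication, and `P ∩ (-P) = {0}`. -/
def IsCone (P : Set V) : Prop :=
  (∀ x ∈ P, ∀ y ∈ P, x + y ∈ P) ∧
  (∀ c : ℝ, 0 ≤ c → ∀ x ∈ P, c • x ∈ P) ∧
  (∀ x ∈ P, -x ∈ P → x = 0)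

/-- The order induced by the cone `P`: `v ≤ w` iff `w - v ∈ P`. -/
def leC (P : Set V) (v w : V) : Prop := w - v ∈ P

/-- The linear effect algebra `E = [0, u]`. -/
def Eff (P : Set V) (u : V) : Set V := {v | leC P 0 v ∧ leC P v u}

/-- `f` is a sharp element of `[0, u]`. -/
def Sharp (P : Set V) (u f : V) : Prop :=
  f ∈ Eff P u ∧ ∀ g ∈ Eff P u, leC P g f → leC P g (u - f) → g = 0

/-- `f` is a one-dimensional element of `[0, u]`. -/
def OneDim (P : Set V) (u f : V) : Prop :=
  f ∈ Eff P u ∧ f ≠ 0 ∧ ∀ g ∈ Eff P u, leC P g f → ∃ t : ℝ, 0 ≤ t ∧ t ≤ 1 ∧ g = t • f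

/-- The set of sharp one-dimensional elements of `[0, u]`. -/
def S1 (P : Set V) (u : V) : Set V := {f | Sharp P u f ∧ OneDim P u f}

/-- A context: a finite family of sharp one-dimensional elements summing to `u`. -/
def IsContext (P : Set V) (u : V) {n : ℕ} (a : Fin n → V) : Prop :=
  (∀ i, a i ∈ S1 P u) ∧ ∑ i, a i = u

/-- The effect algebra `[0, u]` is spectral. -/
def Spectral (P : Set V) (u : V) : Prop :=
  ∀ f ∈ Eff P u, ∃ (n : ℕ) (a : Fin n → V) (μ : Fin n → ℝ),
    IsContext P u a ∧ (∀ i, 0 ≤ μ i ∧ μ i ≤ 1) ∧ f = ∑ i, μ i • a i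

/-- A state on `[0, u]`: a positive linear functional with `s u = 1`. -/
def IsState (P : Set V) (u : V) (s : V →ₗ[ℝ] ℝ) : Prop :=
  (∀ p ∈ P, 0 ≤ s p) ∧ s u = 1

/-- The image of the cone `C₁ × C₂` in the quotient space
`(V₁ × V₂) / span{(u₁, -u₂)}` is a pointed convex cone. -/
theorem stmt_12 {V₁ V₂ : Type*} [AddCommGroup V₁] [Module ℝ V₁]
    [AddCommGroup V₂] [Module ℝ V₂]
    (C₁ : Set V₁) (C₂ : Set V₂) (h₁ : IsCone C₁) (h₂ : IsCone C₂)
    (u₁ : V₁) (u₂ : V₂) (hu₁ : u₁ ∈ C₁) (hu₂ : u₂ ∈ C₂)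
    (hn₁ : u₁ ≠ 0) (hn₂ : u₂ ≠ 0)
    (S : Submodule ℝ (V₁ × V₂)) (hS : S = Submodule.span ℝ {(u₁, -u₂)})
    (C : Set ((V₁ × V₂) ⧸ S)) (hC : C = S.mkQ '' (C₁ ×ˢ C₂)) :
    (∀ x ∈ C, ∀ y ∈ C, x + y ∈ C) ∧
    (∀ c : ℝ, 0 ≤ c → ∀ x ∈ C, c • x ∈ C) ∧
    C ∩ (-C) = {0} := by
  obtain ⟨h1add, h1smul, h1pt⟩ := h₁
  obtain ⟨h2add, h2smul, h2pt⟩ := h₂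
  have z1 : (0:V₁) ∈ C₁ := by simpa using h1smul 0 le_rfl u₁ hu₁
  have z2 : (0:V₂) ∈ C₂ := by simpa using h2smul 0 le_rfl u₂ hu₂
  subst hC
  refine ⟨?_, ?_, ?_⟩
  · rintro x ⟨⟨a, b⟩, ⟨ha, hb⟩, rfl⟩ y ⟨⟨c, d⟩, ⟨hc, hd⟩, rfl⟩
    exact ⟨(a + c, b + d), ⟨h1add a ha c hc, h2add b hb d hd⟩, by
      rw [show ((a + c, b + d) : V₁ × V₂) = (a, b) + (c, d) from rfl]; exact map_add S.mkQ _ _⟩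
  · rintro r hr x ⟨⟨a, b⟩, ⟨ha, hb⟩, rfl⟩
    exact ⟨(r • a, r • b), ⟨h1smul r hr a ha, h2smul r hr b hb⟩, by
      rw [show ((r • a, r • b) : V₁ × V₂) = r • (a, b) from rfl]; exact map_smul S.mkQ _ _⟩
  · ext x
    simp only [Set.mem_inter_iff, Set.mem_neg, Set.mem_singleton_iff]
    constructor
    · rintro ⟨⟨⟨a, b⟩, ⟨ha, hb⟩, rfl⟩, ⟨⟨c, d⟩, ⟨hc, hd⟩, hcd⟩⟩
      have hmem : (a + c, b + d) ∈ S := by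
        rw [← Submodule.Quotient.mk_eq_zero]
        have : S.mkQ (a, b) + S.mkQ (c, d) = 0 := by
          rw [hcd]; simp
        rw [show ((a + c, b + d) : V₁ × V₂) = (a, b) + (c, d) from rfl]
        rw [Submodule.Quotient.mk_add]
        exact this
      rw [hS, Submodule.mem_span_singleton] at hmem
      obtain ⟨t, ht⟩ := hmem
      have ht1 : t • u₁ = a + c := congrArg Prod.fst ht
      have ht2 : t • (-u₂) = b + d := congrArg Prod.snd ht
      have ht0 : t = 0 := by
        rcases le_or_gt 0 t with h | h
        · have hbd : b + d = 0 := by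
            apply h2pt (b + d) (h2add b hb d hd)
            rw [← ht2]; simpa using h2smul t h u₂ hu₂
          have : t • u₂ = 0 := by
            have := ht2; rw [hbd] at this; simpa using this.symm
          rcases smul_eq_zero.mp this with h' | h'
          · exact h'
          · exact absurd h' hn₂
        · exfalso
          have hac : a + c = 0 := by
            apply h1pt (a + c) (h1add a ha c hc)
            rw [← ht1, ← neg_smul]
            exact h1smul (-t) (by linarith) u₁ hu₁
          have : t • u₁ = 0 := by rw [ht1, hac]
          rcases smul_eq_zero.mp this with h' | h'
          · exact absurd h' h.ne
          · exact hn₁ h'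
      have hac : a + c = 0 := by rw [← ht1, ht0, zero_smul]
      have hbd : b + d = 0 := by rw [← ht2, ht0, zero_smul]
      have ha0 : a = 0 := h1pt a ha (by rw [neg_eq_of_add_eq_zero_right hac]; exact hc)
      have hb0 : b = 0 := h2pt b hb (by rw [neg_eq_of_add_eq_zero_right hbd]; exact hd)
      rw [ha0, hb0]; simp; exact S.zero_mem
    · rintro rfl
      refine ⟨⟨(0, 0), ⟨z1, z2⟩, by simp; exact S.zero_mem⟩, ⟨(0, 0), ⟨z1, z2⟩, by simp; exact S.zero_mem⟩⟩
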